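/- Assume moreover C_γ > C_α > 0 and 0 < C_R ≤ C_γ − C_α. Then K𝟏(ξ) = C_β/(C_β+C_δ) for every ξ ≥ x₀, and K𝟏(ξ) ≤ (C_β/(C_β+C_δ))·(ξ/x₀)^{C_δ/(C_γ−C_α)} for every ξ with 0 < ξ < x₀. -/

import Mathlib

open MeasureTheory

/-- Birth rate in the allometric setting with `β = α−1`: `b(x) = C_β x^{α−1}` for
`x > x₀` and `0` otherwise. -/
noncomputable def birthRate (x₀ Cβ α : ℝ) (x : ℝ) : ℝ :=
  if x₀ < x then Cβ * x ^ (α - 1) else 0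

/-- Death rate `d(x) = C_δ x^{α−1}`. -/
noncomputable def deathRate (Cδ α : ℝ) (x : ℝ) : ℝ := Cδ * x ^ (α - 1)

/-- Net energy gain `g(x) = C_R x^α`. -/
noncomputable def energyGain (CR α : ℝ) (x : ℝ) : ℝ := CR * x ^ α

/-- The operator `K`:
`K f(ξ) = ∫_ξ^∞ (b(x)/g(x)) exp(−∫_ξ^x (b+d)/g) f(x−x₀) dx`. -/
noncomputable def Kop (x₀ Cβ Cδ CR α : ℝ) (f : ℝ → ℝ) (ξ : ℝ) : ℝ :=
  ∫ x in Set.Ioi ξ,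
    birthRate x₀ Cβ α x / energyGain CR α x *
      Real.exp
        (-(∫ τ in ξ..x,
            (birthRate x₀ Cβ α τ + deathRate Cδ α τ) / energyGain CR α τ)) *
      f (x - x₀)

/-- Algebraic simplification of the rate ratio. -/
lemma ratio_eq {α C CR x : ℝ} (hx : 0 < x) :
    C * x ^ (α - 1) / (CR * x ^ α) = C / CR * x⁻¹ := by
  rw [mul_div_mul_comm, ← Real.rpow_sub hx]
  have h : α - 1 - α = -1 := by ring
  rw [h, Real.rpow_neg_one]

/-- The core improper integral computation. -/
lemma core_integral {Cβ Cδ CR a : ℝ} (hCβ : 0 < Cβ) (hCδ : 0 < Cδ) (hCR : 0 < CR)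
    (ha : 0 < a) :
    ∫ x in Set.Ioi a, Cβ / CR * x⁻¹ * Real.exp (-((Cβ + Cδ) / CR * Real.log (x / a)))
      = Cβ / (Cβ + Cδ) := by
  set c := (Cβ + Cδ) / CR with hc
  have hc0 : 0 < c := div_pos (by linarith) hCR
  have heq : Set.EqOn (fun x => Cβ / CR * x⁻¹ * Real.exp (-(c * Real.log (x / a))))
      (fun x => Cβ / CR * a ^ c * x ^ (-1 - c)) (Set.Ioi a) := by
    intro x hx
    have hx0 : 0 < x := lt_trans ha hx
    have hxa : 0 < x / a := div_pos hx0 ha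
    simp only
    rw [show -(c * Real.log (x / a)) = Real.log (x / a) * (-c) by ring,
      ← Real.rpow_def_of_pos hxa, Real.div_rpow hx0.le ha.le,
      Real.rpow_neg ha.le, div_eq_mul_inv (x ^ (-c)) ((a ^ c)⁻¹), inv_inv,
      show ((-1 : ℝ) - c) = (-1) + (-c) by ring, Real.rpow_add hx0, Real.rpow_neg_one]
    ring
  rw [MeasureTheory.setIntegral_congr_fun measurableSet_Ioi heq,
    MeasureTheory.integral_const_mul, integral_Ioi_rpow_of_lt (by linarith) ha,
    show ((-1 : ℝ) - c) + 1 = -c by ring, Real.rpow_neg ha.le]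
  have ha' : (a : ℝ) ^ c ≠ 0 := (Real.rpow_pos_of_pos ha c).ne'
  have hCRc : CR * c = Cβ + Cδ := by rw [hc]; field_simp
  rw [neg_div_neg_eq, ← hCRc]
  field_simp

lemma inner_hi {α x₀ Cβ Cδ CR : ℝ} (hx₀ : 0 < x₀) {a x : ℝ} (ha : x₀ ≤ a) (hax : a < x) :
    ∫ τ in a..x, (birthRate x₀ Cβ α τ + deathRate Cδ α τ) / energyGain CR α τ
      = (Cβ + Cδ) / CR * Real.log (x / a) := by
  have ha0 : 0 < a := lt_of_lt_of_le hx₀ ha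
  rw [intervalIntegral.integral_congr_ae
    (g := fun τ => (Cβ + Cδ) / CR * τ⁻¹) ?_]
  · rw [intervalIntegral.integral_const_mul, integral_inv_of_pos ha0 (ha0.trans hax)]
  · filter_upwards with τ hτ
    rw [Set.uIoc_of_le hax.le] at hτ
    have hτx₀ : x₀ < τ := lt_of_le_of_lt ha hτ.1
    have hτ0 : 0 < τ := hx₀.trans hτx₀
    simp only [birthRate, deathRate, energyGain, if_pos hτx₀]
    rw [← add_mul]
    exact ratio_eq hτ0

lemma inner_lo {α x₀ Cβ Cδ CR : ℝ} {ξ : ℝ} (hξ : 0 < ξ) (hξx₀ : ξ < x₀) :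
    ∫ τ in ξ..x₀, (birthRate x₀ Cβ α τ + deathRate Cδ α τ) / energyGain CR α τ
      = Cδ / CR * Real.log (x₀ / ξ) := by
  rw [intervalIntegral.integral_congr_ae
    (g := fun τ => Cδ / CR * τ⁻¹) ?_]
  · rw [intervalIntegral.integral_const_mul, integral_inv_of_pos hξ (hξ.trans hξx₀)]
  · filter_upwards with τ hτ
    rw [Set.uIoc_of_le hξx₀.le] at hτ
    simp only [birthRate, deathRate, energyGain, if_neg (not_lt.2 hτ.2), zero_add]
    exact ratio_eq (hξ.trans hτ.1)

lemma ii_of_eqOn {f g : ℝ → ℝ} {a b : ℝ} (hab : a ≤ b)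
    (hg : IntervalIntegrable g volume a b) (h : Set.EqOn g f (Set.Ioc a b)) :
    IntervalIntegrable f volume a b := by
  constructor
  · exact (hg.1.congr_fun h measurableSet_Ioc)
  · rw [Set.Ioc_eq_empty (not_lt.2 hab)]
    exact integrableOn_empty

lemma inv_ii {a b : ℝ} (ha : 0 < a) (hab : a ≤ b) (C : ℝ) :
    IntervalIntegrable (fun τ : ℝ => C * τ⁻¹) volume a b := by
  apply ContinuousOn.intervalIntegrable
  apply continuousOn_const.mul
  apply ContinuousOn.inv₀ continuousOn_id
  intro τ hτ
  rw [Set.uIcc_of_le hab] at hτ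
  exact (lt_of_lt_of_le ha hτ.1).ne'

/-- Piecewise formula for `K𝟏` (proof of Lemma 6.18): with `C_γ > C_α > 0` and
`0 < C_R ≤ C_γ − C_α`, one has `K𝟏(ξ) = C_β/(C_β+C_δ)` for `ξ ≥ x₀`, and
`K𝟏(ξ) ≤ (C_β/(C_β+C_δ))·(ξ/x₀)^{C_δ/(C_γ−C_α)}` for `0 < ξ < x₀`. -/
theorem stmt14 (α x₀ Cβ Cδ CR Cγ Cα : ℝ)
    (hα0 : 0 < α) (hα1 : α ≤ 1) (hx₀ : 0 < x₀)
    (hCβ : 0 < Cβ) (hCδ : 0 < Cδ) (hCR : 0 < CR)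
    (hCα : 0 < Cα) (hCγ : Cα < Cγ) (hCRle : CR ≤ Cγ - Cα) :
    (∀ ξ : ℝ, x₀ ≤ ξ → Kop x₀ Cβ Cδ CR α (fun _ => 1) ξ = Cβ / (Cβ + Cδ)) ∧
      (∀ ξ : ℝ, 0 < ξ → ξ < x₀ →
        Kop x₀ Cβ Cδ CR α (fun _ => 1) ξ ≤
          Cβ / (Cβ + Cδ) * (ξ / x₀) ^ (Cδ / (Cγ - Cα))) := by
  constructor
  · intro ξ hξ
    have hξ0 : 0 < ξ := hx₀.trans_le hξ
    unfold Kop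
    rw [MeasureTheory.setIntegral_congr_fun measurableSet_Ioi
      (g := fun x => Cβ / CR * x⁻¹ * Real.exp (-((Cβ + Cδ) / CR * Real.log (x / ξ)))) ?_]
    · exact core_integral hCβ hCδ hCR hξ0
    · intro x hx
      simp only
      rw [inner_hi hx₀ hξ hx, mul_one]
      have hx0 : 0 < x := hξ0.trans hx
      simp only [birthRate, energyGain, if_pos (lt_of_le_of_lt hξ hx)]
      rw [ratio_eq hx0]
  · intro ξ hξ0 hξ
    have key : Kop x₀ Cβ Cδ CR α (fun _ => 1) ξ
        = Cβ / (Cβ + Cδ) * (ξ / x₀) ^ (Cδ / CR) := by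
      unfold Kop
      set D := Cδ / CR * Real.log (x₀ / ξ) with hD
      have hEq : Set.EqOn
          (fun x => birthRate x₀ Cβ α x / energyGain CR α x *
            Real.exp (-(∫ τ in ξ..x,
              (birthRate x₀ Cβ α τ + deathRate Cδ α τ) / energyGain CR α τ)) * 1)
          (Set.indicator (Set.Ioi x₀)
            (fun x => Real.exp (-D) *
              (Cβ / CR * x⁻¹ * Real.exp (-((Cβ + Cδ) / CR * Real.log (x / x₀))))))
          (Set.Ioi ξ) := by
        intro x hx
        by_cases hxx₀ : x₀ < x
        · rw [Set.indicator_of_mem (Set.mem_Ioi.mpr hxx₀)]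
          have h1 : IntervalIntegrable
              (fun τ => (birthRate x₀ Cβ α τ + deathRate Cδ α τ) / energyGain CR α τ)
              volume ξ x₀ := by
            apply ii_of_eqOn hξ.le (inv_ii hξ0 hξ.le (Cδ / CR))
            intro τ hτ
            simp only [birthRate, deathRate, energyGain, if_neg (not_lt.2 hτ.2), zero_add]
            exact (ratio_eq (hξ0.trans hτ.1)).symm
          have h2 : IntervalIntegrable
              (fun τ => (birthRate x₀ Cβ α τ + deathRate Cδ α τ) / energyGain CR α τ)
              volume x₀ x := by
            apply ii_of_eqOn hxx₀.le (inv_ii hx₀ hxx₀.le ((Cβ + Cδ) / CR))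
            intro τ hτ
            simp only [birthRate, deathRate, energyGain, if_pos hτ.1]
            rw [← add_mul]
            exact (ratio_eq (hx₀.trans hτ.1)).symm
          have hsplit : (∫ τ in ξ..x,
              (birthRate x₀ Cβ α τ + deathRate Cδ α τ) / energyGain CR α τ)
              = D + (Cβ + Cδ) / CR * Real.log (x / x₀) := by
            rw [← intervalIntegral.integral_add_adjacent_intervals h1 h2,
              inner_lo hξ0 hξ, inner_hi hx₀ le_rfl hxx₀]
          simp only
          rw [hsplit, mul_one, neg_add, Real.exp_add]
          have hx0 : 0 < x := hx₀.trans hxx₀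
          simp only [birthRate, energyGain, if_pos hxx₀]
          rw [ratio_eq hx0]
          ring
        · rw [Set.indicator_of_notMem (by simpa using hxx₀)]
          simp only [birthRate, energyGain, if_neg hxx₀, zero_div, zero_mul, mul_one]
      rw [MeasureTheory.setIntegral_congr_fun measurableSet_Ioi hEq,
        MeasureTheory.setIntegral_indicator measurableSet_Ioi,
        Set.Ioi_inter_Ioi, max_eq_right hξ.le,
        MeasureTheory.integral_const_mul, core_integral hCβ hCδ hCR hx₀]
      have hED : Real.exp (-D) = (ξ / x₀) ^ (Cδ / CR) := by
        rw [Real.rpow_def_of_pos (div_pos hξ0 hx₀), hD,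
          Real.log_div hξ0.ne' hx₀.ne', Real.log_div hx₀.ne' hξ0.ne']
        ring_nf
      rw [hED]
      ring
    rw [key]
    have hbase0 : 0 < ξ / x₀ := div_pos hξ0 hx₀
    have hbase1 : ξ / x₀ ≤ 1 := (div_le_one hx₀).2 hξ.le
    have hexp : Cδ / (Cγ - Cα) ≤ Cδ / CR :=
      div_le_div_of_nonneg_left hCδ.le hCR hCRle
    have := Real.rpow_le_rpow_of_exponent_ge hbase0 hbase1 hexp
    have hpos : 0 ≤ Cβ / (Cβ + Cδ) := by positivity
    exact mul_le_mul_of_nonneg_left this hpos
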